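/- arXiv:0902.4840 — 3 statements merged into one kernel-verified Lean document; each statement's English description precedes it below -/
import Mathlib

section
/- For every m with 1 ≤ m ≤ n-1 and every element u of the free group F, one has Ψ_{σ_m}(Ψ_{σ_m}(u)) =_R p_{m,m+1}^{-1} u p_{m,m+1}, i.e. π(Ψ_{σ_m}(Ψ_{σ_m}(u))) = π(p_{m,m+1})^{-1} π(u) π(p_{m,m+1}) in the presented group G. -/
namespace PureHilden

/-- The three symbols `p`, `x`, `y`. -/
inductive Sym : Type
  | p | x | y
  deriving DecidableEq

open Sym

/-- Generators of the free group `F`:  `p_{ij}, x_{ij}, y_{ij}` for `1 ≤ i < j ≤ n`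
and `t_k` for `1 ≤ k ≤ n`. -/
inductive Gen (n : ℕ) : Type
  | pair (s : Sym) (i j : ℕ) (h : 1 ≤ i ∧ i < j ∧ j ≤ n) : Gen n
  | t (k : ℕ) (h : 1 ≤ k ∧ k ≤ n) : Gen n

/-- The free group `F` on the set `S`. -/
abbrev FG (n : ℕ) := FreeGroup (Gen n)

/-- `α_{ij}` (symmetrised: `α_{ji} = α_{ij}`); junk value `1` for invalid indices. -/
def gsym (n : ℕ) (s : Sym) (i j : ℕ) : FG n :=
  if h : 1 ≤ min i j ∧ min i j < max i j ∧ max i j ≤ n then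
    FreeGroup.of (Gen.pair s (min i j) (max i j) h)
  else 1

def P (n i j : ℕ) : FG n := gsym n Sym.p i j
def X (n i j : ℕ) : FG n := gsym n Sym.x i j
def Y (n i j : ℕ) : FG n := gsym n Sym.y i j

def T (n k : ℕ) : FG n :=
  if h : 1 ≤ k ∧ k ≤ n then FreeGroup.of (Gen.t k h) else 1

/-- `1 ≤ k ≤ n`. -/
def Idx (n k : ℕ) : Prop := 1 ≤ k ∧ k ≤ n

/-- `1 ≤ i < j ≤ n`. -/
def Idx2 (n i j : ℕ) : Prop := 1 ≤ i ∧ i < j ∧ j ≤ n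

/-- `(i,j,k)` is a cyclic rotation of a strictly increasing triple. -/
def cyc3 (i j k : ℕ) : Prop := (i < j ∧ j < k) ∨ (j < k ∧ k < i) ∨ (k < i ∧ i < j)

/-- `(i,j,k,l)` is a cyclic rotation of a strictly increasing quadruple. -/
def cyc4 (i j k l : ℕ) : Prop :=
  (i < j ∧ j < k ∧ k < l) ∨ (j < k ∧ k < l ∧ l < i) ∨
  (k < l ∧ l < i ∧ i < j) ∨ (l < i ∧ i < j ∧ j < k)

def c2A : List (Sym × Sym × Sym) :=
  [(p,p,p),(p,y,y),(x,p,p),(x,x,p),(x,y,y),(y,p,p),(y,p,x),(y,y,y)]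
def c2B : List (Sym × Sym × Sym) :=
  [(p,p,p),(p,x,y),(x,p,p),(x,p,x),(x,x,y),(y,p,p),(y,x,y),(y,y,p)]
def c2C : List (Sym × Sym × Sym) :=
  [(p,p,p),(p,x,x),(x,p,p),(x,x,x),(x,y,p),(y,p,p),(y,p,y),(y,x,x)]

/-- The allowed triples `(α,β,γ)` for relation (C2), by cyclic ordering of `(i,j,k)`. -/
def C2ok (i j k : ℕ) (a b c : Sym) : Prop :=
  (i < j ∧ j < k ∧ (a,b,c) ∈ c2A) ∨
  (j < k ∧ k < i ∧ (a,b,c) ∈ c2B) ∨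
  (k < i ∧ i < j ∧ (a,b,c) ∈ c2C)

/-- The relations `R`, encoded as the words `u * v⁻¹` for each relation `u = v`. -/
inductive Rel (n : ℕ) : FG n → Prop
  | cpt {i j k : ℕ} (hij : Idx2 n i j) (hk : Idx n k) :
      Rel n (P n i j * T n k * (T n k * P n i j)⁻¹)
  | ctt {i j : ℕ} (hi : Idx n i) (hj : Idx n j) :
      Rel n (T n i * T n j * (T n j * T n i)⁻¹)
  | cxt {i j k : ℕ} (hij : Idx2 n i j) (hk : Idx n k) (hne : k ≠ i) :
      Rel n (X n i j * T n k * (T n k * X n i j)⁻¹)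
  | cyt {i j k : ℕ} (hij : Idx2 n i j) (hk : Idx n k) (hne : k ≠ j) :
      Rel n (Y n i j * T n k * (T n k * Y n i j)⁻¹)
  | c1 (a b : Sym) {i j k l : ℕ} (hi : Idx n i) (hj : Idx n j) (hk : Idx n k)
      (hl : Idx n l) (hc : cyc4 i j k l) :
      Rel n (gsym n a i j * gsym n b k l * (gsym n b k l * gsym n a i j)⁻¹)
  | c2 (a b c : Sym) {i j k : ℕ} (hi : Idx n i) (hj : Idx n j) (hk : Idx n k)
      (h : C2ok i j k a b c) :
      Rel n (gsym n a i j * (gsym n b i k * gsym n c j k) *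
             (gsym n b i k * gsym n c j k * gsym n a i j)⁻¹)
  | c3 (a b : Sym) {i j k l : ℕ} (hi : Idx n i) (hj : Idx n j) (hk : Idx n k)
      (hl : Idx n l) (hc : cyc4 i j k l) :
      Rel n (gsym n a i k * (P n j k * gsym n b j l * (P n j k)⁻¹) *
             (P n j k * gsym n b j l * (P n j k)⁻¹ * gsym n a i k)⁻¹)
  | mx {i j : ℕ} (hij : Idx2 n i j) :
      Rel n (X n i j * P n i j * T n i * (P n i j * T n i * X n i j)⁻¹)
  | my {i j : ℕ} (hij : Idx2 n i j) :
      Rel n (Y n i j * P n i j * T n j * (P n i j * T n j * Y n i j)⁻¹)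

/-- The presented group `G = ⟨S ∣ R⟩`. -/
abbrev GG (n : ℕ) := FG n ⧸ Subgroup.normalClosure {w : FG n | Rel n w}

/-- The quotient homomorphism `π : F → G`. -/
def piG (n : ℕ) : FG n →* GG n := QuotientGroup.mk' _

/-- The map defining `Φ_{σ_m}` on generators. -/
def phiSigmaMap (n m : ℕ) : Gen n → FG n
  | Gen.pair s i j _ =>
      if i = m ∧ j = m + 1 then
        match s with
        | Sym.p => P n m (m+1)
        | Sym.x => (T n (m+1))⁻¹ * Y n m (m+1) * T n (m+1)
        | Sym.y => X n m (m+1)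
      else if i = m then gsym n s (m+1) j
      else if j = m then gsym n s (m+1) i
      else if i = m + 1 then P n m (m+1) * gsym n s m j * (P n m (m+1))⁻¹
      else if j = m + 1 then P n m (m+1) * gsym n s m i * (P n m (m+1))⁻¹
      else gsym n s i j
  | Gen.t k _ =>
      if k = m then T n (m+1) else if k = m + 1 then T n m else T n k

/-- `Φ_{σ_m} : F → F`. -/
def phiSigma (n m : ℕ) : FG n →* FG n := FreeGroup.lift (phiSigmaMap n m)

/-- The map defining `Ψ_{σ_m}` on generators. -/
def psiSigmaMap (n m : ℕ) : Gen n → FG n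
  | Gen.pair s i j _ =>
      if i = m ∧ j = m + 1 then
        match s with
        | Sym.p => P n m (m+1)
        | Sym.x => Y n m (m+1)
        | Sym.y => T n m * X n m (m+1) * (T n m)⁻¹
      else if i = m then (P n m (m+1))⁻¹ * gsym n s (m+1) j * P n m (m+1)
      else if j = m then (P n m (m+1))⁻¹ * gsym n s (m+1) i * P n m (m+1)
      else if i = m + 1 then gsym n s m j
      else if j = m + 1 then gsym n s m i
      else gsym n s i j
  | Gen.t k _ =>
      if k = m then T n (m+1) else if k = m + 1 then T n m else T n k

/-- `Ψ_{σ_m} : F → F`. -/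
def psiSigma (n m : ℕ) : FG n →* FG n := FreeGroup.lift (psiSigmaMap n m)

/-- The map defining `Φ_{τ_m}` on generators. -/
def phiTauMap (n m : ℕ) : Gen n → FG n
  | Gen.pair s i j _ =>
      match s with
      | Sym.p => P n i j
      | Sym.x => if m = i then (X n i j)⁻¹ * P n i j else X n i j
      | Sym.y => if m = j then (Y n i j)⁻¹ * P n i j else Y n i j
  | Gen.t k _ => T n k

/-- `Φ_{τ_m} : F → F`. -/
def phiTau (n m : ℕ) : FG n →* FG n := FreeGroup.lift (phiTauMap n m)

/-- The map defining `Ψ_{τ_m}` on generators. -/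
def psiTauMap (n m : ℕ) : Gen n → FG n
  | Gen.pair s i j _ =>
      match s with
      | Sym.p => P n i j
      | Sym.x => if m = i then P n i j * (X n i j)⁻¹ else X n i j
      | Sym.y => if m = j then P n i j * (Y n i j)⁻¹ else Y n i j
  | Gen.t k _ => T n k

/-- `Ψ_{τ_m} : F → F`. -/
def psiTau (n m : ℕ) : FG n →* FG n := FreeGroup.lift (psiTauMap n m)

section Aux

variable {n : ℕ}

lemma piG_rel {w : FG n} (h : Rel n w) : piG n w = 1 := by
  rw [piG, QuotientGroup.mk'_apply, QuotientGroup.eq_one_iff]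
  exact Subgroup.subset_normalClosure h

lemma piG_eq {u v : FG n} (h : Rel n (u * v⁻¹)) : piG n u = piG n v := by
  have h1 := piG_rel h
  rw [map_mul, map_inv, mul_inv_eq_one] at h1
  exact h1

lemma piG_comm {u v : FG n} (h : Rel n (u * v * (v * u)⁻¹)) :
    piG n u * piG n v = piG n v * piG n u := by
  have := piG_eq h
  simpa [map_mul] using this

lemma conj_eq_of_comm {G : Type*} [Group G] {a q : G} (h : a * q = q * a) :
    q⁻¹ * a * q = a := by
  rw [mul_assoc, h, ← mul_assoc, inv_mul_cancel, one_mul]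

lemma aux_conj {G : Type*} [Group G] {A B C : G} (h : A * B * C = B * C * A) :
    C * A * C⁻¹ = B⁻¹ * A * B := by
  calc C * A * C⁻¹ = B⁻¹ * (B * C * A) * C⁻¹ := by group
    _ = B⁻¹ * (A * B * C) * C⁻¹ := by rw [h]
    _ = B⁻¹ * A * B := by group

lemma gsym_symm (s : Sym) (i j : ℕ) : gsym n s i j = gsym n s j i := by
  simp [gsym, min_comm, max_comm]

lemma gsym_eq (s : Sym) {i j : ℕ} (h : Idx2 n i j) :
    gsym n s i j = FreeGroup.of (Gen.pair s i j h) := by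
  have h1 : min i j = i := min_eq_left h.2.1.le
  have h2 : max i j = j := max_eq_right h.2.1.le
  rw [gsym]
  simp only [h1, h2]
  exact dif_pos h

lemma psiSigma_of (m : ℕ) (g : Gen n) :
    psiSigma n m (FreeGroup.of g) = psiSigmaMap n m g :=
  FreeGroup.lift_apply_of

lemma psiSigma_gsym (m : ℕ) (s : Sym) {i j : ℕ} (h : Idx2 n i j) :
    psiSigma n m (gsym n s i j) = psiSigmaMap n m (Gen.pair s i j h) := by
  rw [gsym_eq s h, psiSigma_of]

lemma T_eq {k : ℕ} (h : Idx n k) : T n k = FreeGroup.of (Gen.t k h) := dif_pos h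

lemma psiSigma_T (m : ℕ) {k : ℕ} (h : Idx n k) :
    psiSigma n m (T n k) =
      if k = m then T n (m+1) else if k = m+1 then T n m else T n k := by
  conv_lhs => rw [T_eq h, psiSigma_of]
  simp only [psiSigmaMap]

variable {m : ℕ}

lemma psiMap_Ap (h : Idx2 n m (m+1)) :
    psiSigmaMap n m (Gen.pair Sym.p m (m+1) h) = P n m (m+1) := by
  rw [psiSigmaMap.eq_def]; dsimp only; rw [if_pos ⟨rfl, rfl⟩]

lemma psiMap_Ax (h : Idx2 n m (m+1)) :
    psiSigmaMap n m (Gen.pair Sym.x m (m+1) h) = Y n m (m+1) := by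
  rw [psiSigmaMap.eq_def]; dsimp only; rw [if_pos ⟨rfl, rfl⟩]

lemma psiMap_Ay (h : Idx2 n m (m+1)) :
    psiSigmaMap n m (Gen.pair Sym.y m (m+1) h) = T n m * X n m (m+1) * (T n m)⁻¹ := by
  rw [psiSigmaMap.eq_def]; dsimp only; rw [if_pos ⟨rfl, rfl⟩]

lemma psiMap_B (s : Sym) {j : ℕ} (h : Idx2 n m j) (hj : ¬ j = m + 1) :
    psiSigmaMap n m (Gen.pair s m j h) =
      (P n m (m+1))⁻¹ * gsym n s (m+1) j * P n m (m+1) := by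
  rw [psiSigmaMap.eq_def]; dsimp only
  rw [if_neg (fun hc => hj hc.2), if_pos rfl]

lemma psiMap_C (s : Sym) {i : ℕ} (h : Idx2 n i m) :
    psiSigmaMap n m (Gen.pair s i m h) =
      (P n m (m+1))⁻¹ * gsym n s (m+1) i * P n m (m+1) := by
  have him : i < m := h.2.1
  rw [psiSigmaMap.eq_def]; dsimp only
  rw [if_neg (by omega : ¬(i = m ∧ m = m + 1)), if_neg (by omega : ¬ i = m),
    if_pos rfl]

lemma psiMap_D (s : Sym) {j : ℕ} (h : Idx2 n (m+1) j) :
    psiSigmaMap n m (Gen.pair s (m+1) j h) = gsym n s m j := by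
  have hj : m + 1 < j := h.2.1
  rw [psiSigmaMap.eq_def]; dsimp only
  rw [if_neg (by omega : ¬(m + 1 = m ∧ j = m + 1)), if_neg (by omega : ¬ m + 1 = m),
    if_neg (by omega : ¬ j = m), if_pos rfl]

lemma psiMap_E (s : Sym) {i : ℕ} (h : Idx2 n i (m+1)) (hi : ¬ i = m) :
    psiSigmaMap n m (Gen.pair s i (m+1) h) = gsym n s m i := by
  have him : i < m + 1 := h.2.1
  rw [psiSigmaMap.eq_def]; dsimp only
  rw [if_neg (by omega : ¬(i = m ∧ m + 1 = m + 1)), if_neg hi,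
    if_neg (by omega : ¬ m + 1 = m), if_neg (by omega : ¬ i = m + 1), if_pos rfl]

lemma psiMap_F (s : Sym) {i j : ℕ} (h : Idx2 n i j) (h1 : ¬ i = m) (h2 : ¬ j = m)
    (h3 : ¬ i = m + 1) (h4 : ¬ j = m + 1) :
    psiSigmaMap n m (Gen.pair s i j h) = gsym n s i j := by
  rw [psiSigmaMap.eq_def]; dsimp only
  rw [if_neg (fun hc => h1 hc.1), if_neg h1, if_neg h2, if_neg h3, if_neg h4]

end Aux

/-- For `1 ≤ m ≤ n-1` and all `u ∈ F`,
`Ψ_{σ_m}(Ψ_{σ_m}(u)) =_R p_{m,m+1}⁻¹ u p_{m,m+1}`. -/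
theorem psiSigma_sq (n : ℕ) (hn : 2 ≤ n) (m : ℕ) (hm : 1 ≤ m ∧ m ≤ n - 1)
    (u : FG n) :
    piG n (psiSigma n m (psiSigma n m u)) =
      (piG n (P n m (m+1)))⁻¹ * piG n u * piG n (P n m (m+1)) := by
  obtain ⟨hm1, hm2⟩ := hm
  have hmn : m + 1 ≤ n := by omega
  have hQ : Idx2 n m (m+1) := ⟨hm1, Nat.lt_succ_self m, hmn⟩
  have hmI : Idx n m := ⟨hm1, by omega⟩
  have hm1I : Idx n (m+1) := ⟨by omega, hmn⟩
  have psiP : psiSigma n m (P n m (m+1)) = P n m (m+1) := by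
    conv_lhs => rw [P]
    rw [psiSigma_gsym m Sym.p hQ, psiMap_Ap hQ]
  have key : ∀ g : Gen n,
      piG n (psiSigma n m (psiSigma n m (FreeGroup.of g))) =
        (piG n (P n m (m+1)))⁻¹ * piG n (FreeGroup.of g) * piG n (P n m (m+1)) := by
    intro g
    have hcomT : ∀ k' (hk' : Idx n k'),
        (piG n (P n m (m+1)))⁻¹ * piG n (T n k') * piG n (P n m (m+1)) =
          piG n (T n k') := fun k' hk' =>
      conj_eq_of_comm (piG_comm (Rel.cpt hQ hk')).symm
    cases g with
    | t k hk =>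
      rw [← T_eq hk, psiSigma_T m hk]
      by_cases h1 : k = m
      · rw [if_pos h1, psiSigma_T m hm1I, if_neg (by omega : ¬ m + 1 = m),
          if_pos rfl, h1]
        exact (hcomT m hmI).symm
      · by_cases h2 : k = m + 1
        · rw [if_neg h1, if_pos h2, psiSigma_T m hmI, if_pos rfl, h2]
          exact (hcomT _ hm1I).symm
        · rw [if_neg h1, if_neg h2, psiSigma_T m hk, if_neg h1, if_neg h2]
          exact (hcomT _ hk).symm
    | pair s i j hij =>
      obtain ⟨hi1, hij', hjn⟩ := hij
      have hij : Idx2 n i j := ⟨hi1, hij', hjn⟩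
      have hiI : Idx n i := ⟨hi1, by omega⟩
      have hjI : Idx n j := ⟨by omega, hjn⟩
      rw [← gsym_eq s hij, psiSigma_gsym m s hij]
      by_cases hA : i = m ∧ j = m + 1
      · obtain ⟨rfl, rfl⟩ := hA
        cases s with
        | p =>
          rw [psiMap_Ap hij, psiP,
            show gsym n Sym.p i (i+1) = P n i (i+1) from rfl]
          group
        | x =>
          rw [psiMap_Ax hij, Y, psiSigma_gsym i Sym.y hQ, psiMap_Ay hQ]
          have hmx := piG_eq (Rel.mx hQ)
          rw [show gsym n Sym.x i (i+1) = X n i (i+1) from rfl]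
          simp only [map_mul] at hmx
          simp only [map_mul, map_inv]
          exact aux_conj hmx
        | y =>
          rw [psiMap_Ay hij]
          simp only [map_mul, map_inv]
          rw [psiSigma_T i hmI, if_pos rfl, X, psiSigma_gsym i Sym.x hQ,
            psiMap_Ax hQ]
          have hmy := piG_eq (Rel.my hQ)
          rw [show gsym n Sym.y i (i+1) = Y n i (i+1) from rfl]
          simp only [map_mul] at hmy
          exact aux_conj hmy
      · by_cases hB : i = m
        · subst hB
          have hjne : ¬ j = i + 1 := fun hc => hA ⟨rfl, hc⟩
          have hjm : i + 1 < j := by omega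
          rw [psiMap_B s hij hjne]
          have h2 : Idx2 n (i+1) j := ⟨by omega, hjm, hjn⟩
          simp only [map_mul, map_inv]
          rw [psiP, psiSigma_gsym i s h2, psiMap_D s h2]
        · by_cases hC : j = m
          · subst hC
            rw [psiMap_C s hij]
            have h2 : Idx2 n i (j+1) := ⟨hi1, by omega, hmn⟩
            simp only [map_mul, map_inv]
            rw [psiP, gsym_symm s (j+1) i, psiSigma_gsym j s h2,
              psiMap_E s h2 hB, gsym_symm s j i]
          · by_cases hD : i = m + 1
            · subst hD
              rw [psiMap_D s hij]
              have h2 : Idx2 n m j := ⟨hm1, by omega, hjn⟩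
              rw [psiSigma_gsym m s h2,
                psiMap_B s h2 (by omega : ¬ j = m + 1)]
              simp [map_mul]
            · by_cases hE : j = m + 1
              · subst hE
                rw [psiMap_E s hij hB]
                have h2 : Idx2 n i m := ⟨hi1, by omega, by omega⟩
                rw [gsym_symm s m i, psiSigma_gsym m s h2, psiMap_C s h2,
                  gsym_symm s (m+1) i]
                simp [map_mul]
              · rw [psiMap_F s hij hB hC hD hE, psiSigma_gsym m s hij,
                  psiMap_F s hij hB hC hD hE]
                rcases (by omega : j < m ∨ m + 1 < i ∨ (i < m ∧ m + 1 < j))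
                  with h | h | h
                · have hc : cyc4 i j m (m+1) := by unfold cyc4; omega
                  exact (conj_eq_of_comm (piG_comm
                    (Rel.c1 s Sym.p hiI hjI hmI hm1I hc))).symm
                · have hc : cyc4 i j m (m+1) := by unfold cyc4; omega
                  exact (conj_eq_of_comm (piG_comm
                    (Rel.c1 s Sym.p hiI hjI hmI hm1I hc))).symm
                · rw [gsym_symm s i j]
                  have hc : cyc4 j i m (m+1) := by unfold cyc4; omega
                  exact (conj_eq_of_comm (piG_comm
                    (Rel.c1 s Sym.p hjI hiI hmI hm1I hc))).symm
  refine FreeGroup.induction_on u ?_ ?_ ?_ ?_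
  · simp
  · exact key
  · intro x hx
    simp only [map_inv] at hx ⊢
    rw [hx]
    group
  · intro x y hx hy
    simp only [map_mul, hx, hy]
    group

end PureHilden
end

section
/- Assume n ≥ 3. In the presented group G the elements x_{12}x_{13} and p_{12}p_{13}t_1 commute: (x_{12}x_{13})(p_{12}p_{13}t_1) =_R (p_{12}p_{13}t_1)(x_{12}x_{13}). -/
namespace PureHilden

open Sym

/-- If `u * v⁻¹` is a relation, then `π u = π v`. -/
lemma pi_eq {n : ℕ} {u v : FG n} (h : Rel n (u * v⁻¹)) : piG n u = piG n v := by
  have h1 : piG n (u * v⁻¹) = 1 :=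
    (QuotientGroup.eq_one_iff _).mpr (Subgroup.subset_normalClosure h)
  rw [map_mul, map_inv] at h1
  exact mul_inv_eq_one.mp h1

/-- If `a * b * (b * a)⁻¹` is a relation, then `π a` and `π b` commute. -/
lemma pi_comm {n : ℕ} {a b : FG n} (h : Rel n (a * b * (b * a)⁻¹)) :
    Commute (piG n a) (piG n b) := by
  have h2 : piG n a * piG n b = piG n b * piG n a := by
    simpa only [map_mul] using pi_eq h
  exact h2

lemma gsym_comm (n : ℕ) (s : Sym) (i j : ℕ) : gsym n s i j = gsym n s j i := by
  unfold gsym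
  rw [min_comm, max_comm]

/-- STATEMENT 7: For `n ≥ 3`, in `G` the elements `x₁₂x₁₃` and `p₁₂p₁₃t₁`
commute. -/
theorem x12x13_comm_p12p13t1 (n : ℕ) (hn : 3 ≤ n) :
    piG n (X n 1 2 * X n 1 3 * (P n 1 2 * P n 1 3 * T n 1)) =
    piG n (P n 1 2 * P n 1 3 * T n 1 * (X n 1 2 * X n 1 3)) := by
  have i1 : Idx n 1 := ⟨le_refl 1, by omega⟩
  have i2 : Idx n 2 := ⟨by norm_num, by omega⟩
  have i3 : Idx n 3 := ⟨by norm_num, by omega⟩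
  have j12 : Idx2 n 1 2 := ⟨le_refl 1, by norm_num, by omega⟩
  have j13 : Idx2 n 1 3 := ⟨le_refl 1, by norm_num, by omega⟩
  have j23 : Idx2 n 2 3 := ⟨by norm_num, by norm_num, by omega⟩
  set a := piG n (X n 1 2) with ha
  set b := piG n (X n 1 3) with hb
  set p := piG n (P n 1 2) with hp
  set q := piG n (P n 1 3) with hq
  set r := piG n (P n 2 3) with hr
  set t := piG n (T n 1) with ht
  -- commutation of p's with t₁
  have cPT : Commute p t := pi_comm (Rel.cpt j12 i1)
  have cQT : Commute q t := pi_comm (Rel.cpt j13 i1)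
  have cRT : Commute r t := pi_comm (Rel.cpt j23 i1)
  -- M-x relations
  have c1 : Commute a (p * t) := by
    have h := pi_eq (Rel.mx j12)
    simp only [map_mul, ← ha, ← hp, ← ht] at h
    have h2 : a * (p * t) = p * t * a := by rw [← mul_assoc]; exact h
    exact h2
  have c2' : Commute b (q * t) := by
    have h := pi_eq (Rel.mx j13)
    simp only [map_mul, ← hb, ← hq, ← ht] at h
    have h2 : b * (q * t) = q * t * b := by rw [← mul_assoc]; exact h
    exact h2
  -- C2 relations
  have c3 : Commute a (q * r) := by
    have h := pi_comm (Rel.c2 Sym.x Sym.p Sym.p i1 i2 i3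
      (Or.inl ⟨by norm_num, by norm_num, by decide⟩))
    rw [map_mul] at h
    exact h
  have c4 : Commute b (r * p) := by
    have h := pi_comm (Rel.c2 Sym.x Sym.p Sym.p i3 i1 i2
      (Or.inr (Or.inl ⟨by norm_num, by norm_num, by decide⟩)))
    rw [gsym_comm n Sym.x 3 1, gsym_comm n Sym.p 3 2, map_mul] at h
    exact h
  have c5 : Commute r (a * b) := by
    have h := pi_comm (Rel.c2 Sym.p Sym.x Sym.x i2 i3 i1
      (Or.inr (Or.inr ⟨by norm_num, by norm_num, by decide⟩)))
    rw [gsym_comm n Sym.x 2 1, gsym_comm n Sym.x 3 1, map_mul] at h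
    exact h
  have c6 : Commute p (q * r) := by
    have h := pi_comm (Rel.c2 Sym.p Sym.p Sym.p i1 i2 i3
      (Or.inl ⟨by norm_num, by norm_num, by decide⟩))
    rw [map_mul] at h
    exact h
  -- x₁₂ commutes with D = p q r t
  have cTQR : Commute t (q * r) := cQT.symm.mul_right cRT.symm
  have hD1 : (p * t) * (q * r) = p * q * r * t := by
    rw [mul_assoc, cTQR.eq, ← mul_assoc, ← mul_assoc]
  have cAD : Commute a (p * q * r * t) := by
    rw [← hD1]; exact c1.mul_right c3
  -- x₁₃ commutes with D
  have cTRP : Commute t (r * p) := cRT.symm.mul_right cPT.symm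
  have hD2 : (q * t) * (r * p) = p * q * r * t := by
    rw [mul_assoc, cTRP.eq, ← mul_assoc, ← mul_assoc, ← c6.eq, ← mul_assoc]
  have cBD : Commute b (p * q * r * t) := by
    rw [← hD2]; exact c2'.mul_right c4
  have cABD : Commute (a * b) (p * q * r * t) := cAD.mul_left cBD
  have cABR : Commute (a * b) r⁻¹ := c5.symm.inv_right
  have cABG : Commute (a * b) (p * q * r * t * r⁻¹) := cABD.mul_right cABR
  have hG : p * q * r * t * r⁻¹ = p * q * t := by
    rw [mul_assoc (p * q) r t, cRT.eq, ← mul_assoc, mul_assoc (p * q * t) r r⁻¹,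
      mul_inv_cancel, mul_one]
  rw [hG] at cABG
  simp only [map_mul, ← ha, ← hb, ← hp, ← hq, ← ht]
  exact cABG

end PureHilden
end

section
/- For all indices 1 ≤ i < j < k ≤ n, in the presented group G one has y_{ik}^{-1} p_{ik} y_{jk}^{-1} p_{jk} =_R y_{jk}^{-1} y_{ik}^{-1} p_{ik} p_{jk}. -/
namespace PureHilden

open Sym

lemma gsym_swap (n : ℕ) (s : Sym) (i j : ℕ) : gsym n s j i = gsym n s i j := by
  unfold gsym; rw [min_comm, max_comm]

lemma pi_rel_one {n : ℕ} {w : FG n} (h : Rel n w) : piG n w = 1 := by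
  rw [piG, QuotientGroup.mk'_apply, QuotientGroup.eq_one_iff]
  exact Subgroup.subset_normalClosure h

lemma pi_comm_s13 {n : ℕ} {u v : FG n} (h : Rel n (u * v * (v * u)⁻¹)) :
    piG n u * piG n v = piG n v * piG n u := by
  have h1 := pi_rel_one h
  simp only [map_mul, map_inv] at h1
  exact mul_inv_eq_one.mp h1

/-- STATEMENT 16: For `1 ≤ i < j < k ≤ n`, in `G`:
`y_ik⁻¹ p_ik y_jk⁻¹ p_jk =_R y_jk⁻¹ y_ik⁻¹ p_ik p_jk`. -/
theorem stmt16 (n : ℕ) (hn : 2 ≤ n) (i j k : ℕ)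
    (h : 1 ≤ i ∧ i < j ∧ j < k ∧ k ≤ n) :
    piG n ((Y n i k)⁻¹ * P n i k * (Y n j k)⁻¹ * P n j k) =
    piG n ((Y n j k)⁻¹ * (Y n i k)⁻¹ * P n i k * P n j k) := by
  obtain ⟨h1i, hij, hjk, hkn⟩ := h
  have hiI : Idx n i := ⟨h1i, ((hij.trans hjk).le.trans hkn)⟩
  have hjI : Idx n j := ⟨h1i.trans hij.le, hjk.le.trans hkn⟩
  have hkI : Idx n k := ⟨hjI.1.trans hjk.le, hkn⟩
  -- (C2) for the cyclically ordered triple (j,k,i), symbols (y,p,y) and (y,p,p)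
  have r1 : Rel n (gsym n Sym.y j k * (gsym n Sym.p j i * gsym n Sym.y k i) *
      (gsym n Sym.p j i * gsym n Sym.y k i * gsym n Sym.y j k)⁻¹) :=
    Rel.c2 Sym.y Sym.p Sym.y hjI hkI hiI (Or.inr (Or.inr ⟨hij, hjk, by decide⟩))
  have r2 : Rel n (gsym n Sym.y j k * (gsym n Sym.p j i * gsym n Sym.p k i) *
      (gsym n Sym.p j i * gsym n Sym.p k i * gsym n Sym.y j k)⁻¹) :=
    Rel.c2 Sym.y Sym.p Sym.p hjI hkI hiI (Or.inr (Or.inr ⟨hij, hjk, by decide⟩))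
  have c1 := pi_comm_s13 r1
  have c2 := pi_comm_s13 r2
  rw [gsym_swap n Sym.p i j, gsym_swap n Sym.y i k] at c1
  rw [gsym_swap n Sym.p i j, gsym_swap n Sym.p i k] at c2
  simp only [map_mul] at c1 c2
  set a := piG n (gsym n Sym.y j k)
  set b := piG n (gsym n Sym.p i j)
  set c := piG n (gsym n Sym.y i k)
  set d := piG n (gsym n Sym.p i k)
  have h1 : Commute a (b * c) := c1
  have h2 : Commute a (b * d) := c2
  have hrw : (b * c)⁻¹ * (b * d) = c⁻¹ * d := by group
  have key : Commute a (c⁻¹ * d) := hrw ▸ (h1.inv_right.mul_right h2)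
  have keyinv : a⁻¹ * (c⁻¹ * d) = (c⁻¹ * d) * a⁻¹ := key.inv_left.eq
  simp only [Y, P, map_mul, map_inv]
  calc c⁻¹ * d * a⁻¹ * piG n (gsym n Sym.p j k)
      = (c⁻¹ * d) * a⁻¹ * piG n (gsym n Sym.p j k) := by group
    _ = a⁻¹ * (c⁻¹ * d) * piG n (gsym n Sym.p j k) := by rw [keyinv]
    _ = a⁻¹ * c⁻¹ * d * piG n (gsym n Sym.p j k) := by group

end PureHilden
end
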